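/- Let (T, q) be a classical solution of the Guyer–Krumhansl system on (0,l) with boundary conditions q(0,t) = q(l,t) = 0, let F(t) := (ρc/2)∫_0^l (∫_x^l T(s,t) ds)² dx + (ρc μ²/2)∫_0^l T(x,t)² dx + τ_q ∫_0^l q(x,t)(∫_x^l T(s,t) ds) dx, and define the Lyapunov functional 𝓛(t) := (2l² + 2μ² + τ_q k/(ρc)) E(t) + F(t). Then for all t ≥ 0, (l² + μ²) E(t) ≤ 𝓛(t) ≤ (3l² + 3μ² + 2τ_q k/(ρc)) E(t). -/

import Mathlib

open Set MeasureTheory intervalIntegral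

lemma cs_aux {f : ℝ → ℝ} {a b : ℝ} (hab : a ≤ b) (hf : ContinuousOn f (Icc a b)) :
    (∫ x in a..b, f x) ^ 2 ≤ (b - a) * ∫ x in a..b, f x ^ 2 := by
  rcases eq_or_lt_of_le hab with rfl | hlt
  · simp
  have hfi : IntervalIntegrable f volume a b := by
    apply ContinuousOn.intervalIntegrable; rwa [uIcc_of_le hab]
  have hfi2 : IntervalIntegrable (fun x => f x ^ 2) volume a b := by
    apply ContinuousOn.intervalIntegrable; rw [uIcc_of_le hab]; exact hf.pow 2
  set I := ∫ x in a..b, f x with hI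
  set S := ∫ x in a..b, f x ^ 2 with hS
  have hba : 0 < b - a := by linarith
  set m := I / (b - a) with hm
  have hmb : m * (b - a) = I := by rw [hm, div_mul_cancel₀ I hba.ne']
  have key : 0 ≤ ∫ x in a..b, (f x - m) ^ 2 :=
    intervalIntegral.integral_nonneg hab fun u _ => sq_nonneg _
  have expand : (∫ x in a..b, (f x - m) ^ 2) = S - 2 * m * I + m ^ 2 * (b - a) := by
    have h : ∀ x, (f x - m) ^ 2 = f x ^ 2 - (2 * m) * f x + m ^ 2 := fun x => by ring
    simp_rw [h]
    rw [intervalIntegral.integral_add (hfi2.sub (hfi.const_mul (2 * m)))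
        intervalIntegrable_const,
      intervalIntegral.integral_sub hfi2 (hfi.const_mul (2 * m)),
      intervalIntegral.integral_const_mul, intervalIntegral.integral_const]
    simp [← hI, ← hS, smul_eq_mul]; ring
  rw [expand] at key
  nlinarith [mul_nonneg key hba.le, hmb, sq_nonneg (m * (b - a) - I)]


/-- A classical solution of the one-dimensional Guyer–Krumhansl system on `(0, l)`:
`T` is the temperature, `q` the heat flux, and `Tt, Tx, qt, qx, qxx` are the
corresponding partial derivatives (continuous on `[0,l] × [0,∞)`), satisfying
`ρ c T_t + q_x = 0` and `τ_q q_t + q − μ² q_xx + k T_x = 0` on `(0,l) × (0,∞)`,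
with adiabatic boundary conditions `q(0,t) = q(l,t) = 0` for all `t ≥ 0`. -/
structure IsGKSolution (l ρ c τq μ2 k : ℝ)
    (T q Tt Tx qt qx qxx : ℝ → ℝ → ℝ) : Prop where
  contT : ContinuousOn (fun p : ℝ × ℝ => T p.1 p.2) (Icc (0:ℝ) l ×ˢ Ici (0:ℝ))
  contq : ContinuousOn (fun p : ℝ × ℝ => q p.1 p.2) (Icc (0:ℝ) l ×ˢ Ici (0:ℝ))
  hTt : ∀ x ∈ Icc (0:ℝ) l, ∀ t ∈ Ici (0:ℝ),
    HasDerivWithinAt (fun s => T x s) (Tt x t) (Ici (0:ℝ)) t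
  hTx : ∀ x ∈ Icc (0:ℝ) l, ∀ t ∈ Ici (0:ℝ),
    HasDerivWithinAt (fun y => T y t) (Tx x t) (Icc (0:ℝ) l) x
  hqt : ∀ x ∈ Icc (0:ℝ) l, ∀ t ∈ Ici (0:ℝ),
    HasDerivWithinAt (fun s => q x s) (qt x t) (Ici (0:ℝ)) t
  hqx : ∀ x ∈ Icc (0:ℝ) l, ∀ t ∈ Ici (0:ℝ),
    HasDerivWithinAt (fun y => q y t) (qx x t) (Icc (0:ℝ) l) x
  hqxx : ∀ x ∈ Icc (0:ℝ) l, ∀ t ∈ Ici (0:ℝ),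
    HasDerivWithinAt (fun y => qx y t) (qxx x t) (Icc (0:ℝ) l) x
  contTt : ContinuousOn (fun p : ℝ × ℝ => Tt p.1 p.2) (Icc (0:ℝ) l ×ˢ Ici (0:ℝ))
  contTx : ContinuousOn (fun p : ℝ × ℝ => Tx p.1 p.2) (Icc (0:ℝ) l ×ˢ Ici (0:ℝ))
  contqt : ContinuousOn (fun p : ℝ × ℝ => qt p.1 p.2) (Icc (0:ℝ) l ×ˢ Ici (0:ℝ))
  contqx : ContinuousOn (fun p : ℝ × ℝ => qx p.1 p.2) (Icc (0:ℝ) l ×ˢ Ici (0:ℝ))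
  contqxx : ContinuousOn (fun p : ℝ × ℝ => qxx p.1 p.2) (Icc (0:ℝ) l ×ˢ Ici (0:ℝ))
  pde1 : ∀ x ∈ Ioo (0:ℝ) l, ∀ t ∈ Ioi (0:ℝ), ρ * c * Tt x t + qx x t = 0
  pde2 : ∀ x ∈ Ioo (0:ℝ) l, ∀ t ∈ Ioi (0:ℝ),
    τq * qt x t + q x t - μ2 * qxx x t + k * Tx x t = 0
  bc0 : ∀ t : ℝ, 0 ≤ t → q 0 t = 0
  bcl : ∀ t : ℝ, 0 ≤ t → q l t = 0

/-- The functional energy `E(t) = (ρc/2)∫₀ˡ T² dx + (τ_q/(2k))∫₀ˡ q² dx`. -/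
noncomputable def gkEnergy (l ρ c τq k : ℝ) (T q : ℝ → ℝ → ℝ) (t : ℝ) : ℝ :=
  ρ * c / 2 * (∫ x in (0:ℝ)..l, (T x t) ^ 2)
    + τq / (2 * k) * (∫ x in (0:ℝ)..l, (q x t) ^ 2)

/-- The auxiliary functional
`F(t) = (ρc/2)∫₀ˡ (∫ₓˡ T ds)² dx + (ρcμ²/2)∫₀ˡ T² dx + τ_q ∫₀ˡ q (∫ₓˡ T ds) dx`. -/
noncomputable def gkF (l ρ c τq μ2 : ℝ) (T q : ℝ → ℝ → ℝ) (t : ℝ) : ℝ :=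
  ρ * c / 2 * (∫ x in (0:ℝ)..l, (∫ s in x..l, T s t) ^ 2)
    + ρ * c * μ2 / 2 * (∫ x in (0:ℝ)..l, (T x t) ^ 2)
    + τq * (∫ x in (0:ℝ)..l, q x t * (∫ s in x..l, T s t))

/-- The boundary term `C_T(t) = (μ² ∂ₓq(0,t) − k T(0,t)) ∫₀ˡ T(s,t) ds`. -/
noncomputable def gkCT (l μ2 k : ℝ) (T qx : ℝ → ℝ → ℝ) (t : ℝ) : ℝ :=
  (μ2 * qx 0 t - k * T 0 t) * ∫ s in (0:ℝ)..l, T s t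

/-- The Lyapunov functional `𝓛(t) = (2l² + 2μ² + τ_q k/(ρc)) E(t) + F(t)`. -/
noncomputable def gkL (l ρ c τq μ2 k : ℝ) (T q : ℝ → ℝ → ℝ) (t : ℝ) : ℝ :=
  (2 * l ^ 2 + 2 * μ2 + τq * k / (ρ * c)) * gkEnergy l ρ c τq k T q t
    + gkF l ρ c τq μ2 T q t

set_option maxHeartbeats 2000000 in
/-- for a classical solution of the Guyer–Krumhansl system, the
Lyapunov functional is equivalent to the energy:
`(l² + μ²) E(t) ≤ 𝓛(t) ≤ (3l² + 3μ² + 2τ_q k/(ρc)) E(t)` for all `t ≥ 0`. -/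
theorem gk_lyapunov_equivalent
    (l ρ c τq μ2 k : ℝ) (hl : 0 < l) (hρ : 0 < ρ) (hc : 0 < c)
    (hτq : 0 < τq) (hμ2 : 0 < μ2) (hk : 0 < k)
    (T q Tt Tx qt qx qxx : ℝ → ℝ → ℝ)
    (hgk : IsGKSolution l ρ c τq μ2 k T q Tt Tx qt qx qxx) :
    ∀ t : ℝ, 0 ≤ t →
      (l ^ 2 + μ2) * gkEnergy l ρ c τq k T q t ≤ gkL l ρ c τq μ2 k T q t
      ∧ gkL l ρ c τq μ2 k T q t
          ≤ (3 * l ^ 2 + 3 * μ2 + 2 * (τq * k / (ρ * c))) * gkEnergy l ρ c τq k T q t := by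
  intro t ht
  have contT := hgk.contT
  have contq := hgk.contq
  simp only [gkL, gkEnergy, gkF]
  have TcOn : ContinuousOn (fun x => T x t) (Icc (0:ℝ) l) := by
    have h1 : ContinuousOn (fun x : ℝ => ((x, t) : ℝ × ℝ)) (Icc (0:ℝ) l) :=
      (continuous_id.prodMk continuous_const).continuousOn
    exact contT.comp h1 fun x hx => ⟨hx, ht⟩
  have qcOn : ContinuousOn (fun x => q x t) (Icc (0:ℝ) l) := by
    have h1 : ContinuousOn (fun x : ℝ => ((x, t) : ℝ × ℝ)) (Icc (0:ℝ) l) :=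
      (continuous_id.prodMk continuous_const).continuousOn
    exact contq.comp h1 fun x hx => ⟨hx, ht⟩
  set G : ℝ → ℝ := fun x => ∫ s in x..l, T s t with hG
  have GcOn : ContinuousOn G (Icc (0:ℝ) l) := by
    have : IntegrableOn (fun s => T s t) (uIcc (0:ℝ) l) := by
      rw [uIcc_of_le hl.le]; exact TcOn.integrableOn_Icc
    have := continuousOn_primitive_interval_left this
    rwa [uIcc_of_le hl.le] at this
  set A := ∫ x in (0:ℝ)..l, (T x t) ^ 2 with hAdef
  set B := ∫ x in (0:ℝ)..l, (q x t) ^ 2 with hBdef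
  set IG := ∫ x in (0:ℝ)..l, (G x) ^ 2 with hIGdef
  set IQG := ∫ x in (0:ℝ)..l, q x t * G x with hIQGdef
  have hA : 0 ≤ A := intervalIntegral.integral_nonneg hl.le fun u _ => sq_nonneg _
  have hB : 0 ≤ B := intervalIntegral.integral_nonneg hl.le fun u _ => sq_nonneg _
  have hIG0 : 0 ≤ IG := intervalIntegral.integral_nonneg hl.le fun u _ => sq_nonneg _
  have hGsq : ∀ x ∈ Icc (0:ℝ) l, G x ^ 2 ≤ l * A := by
    intro x hx
    have h1 : G x ^ 2 ≤ (l - x) * ∫ s in x..l, T s t ^ 2 :=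
      cs_aux hx.2 (TcOn.mono (Icc_subset_Icc hx.1 le_rfl))
    have hi1 : IntervalIntegrable (fun s => T s t ^ 2) volume 0 x := by
      apply ContinuousOn.intervalIntegrable
      rw [uIcc_of_le hx.1]
      exact (TcOn.mono (Icc_subset_Icc le_rfl hx.2)).pow 2
    have hi2 : IntervalIntegrable (fun s => T s t ^ 2) volume x l := by
      apply ContinuousOn.intervalIntegrable
      rw [uIcc_of_le hx.2]
      exact (TcOn.mono (Icc_subset_Icc hx.1 le_rfl)).pow 2
    have hsplit : (∫ s in (0:ℝ)..x, T s t ^ 2) + (∫ s in x..l, T s t ^ 2) = A :=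
      intervalIntegral.integral_add_adjacent_intervals hi1 hi2
    have h0x : 0 ≤ ∫ s in (0:ℝ)..x, T s t ^ 2 :=
      intervalIntegral.integral_nonneg hx.1 fun u _ => sq_nonneg _
    have hxl : 0 ≤ ∫ s in x..l, T s t ^ 2 :=
      intervalIntegral.integral_nonneg hx.2 fun u _ => sq_nonneg _
    nlinarith [hx.1, hx.2]
  have hGi2 : IntervalIntegrable (fun x => G x ^ 2) volume 0 l := by
    apply ContinuousOn.intervalIntegrable
    rw [uIcc_of_le hl.le]; exact GcOn.pow 2
  have hIG1 : IG ≤ l ^ 2 * A := by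
    have := intervalIntegral.integral_mono_on hl.le hGi2 intervalIntegrable_const hGsq
    rw [intervalIntegral.integral_const, ← hIGdef] at this
    simp only [smul_eq_mul, sub_zero] at this
    nlinarith
  clear_value A B IG
  -- bounds on IQG
  have hQGi : IntervalIntegrable (fun x => q x t * G x) volume 0 l := by
    apply ContinuousOn.intervalIntegrable
    rw [uIcc_of_le hl.le]; exact qcOn.mul GcOn
  have hRi : IntervalIntegrable
      (fun x => l ^ 2 / (2 * k) * q x t ^ 2 + k / (2 * l ^ 2) * G x ^ 2) volume 0 l := by
    apply ContinuousOn.intervalIntegrable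
    rw [uIcc_of_le hl.le]
    exact (continuousOn_const.mul (qcOn.pow 2)).add (continuousOn_const.mul (GcOn.pow 2))
  have hptw : ∀ x ∈ Icc (0:ℝ) l,
      |q x t * G x| ≤ l ^ 2 / (2 * k) * q x t ^ 2 + k / (2 * l ^ 2) * G x ^ 2 := by
    intro x _
    have hid1 : (l ^ 2 / (2 * k) * q x t ^ 2 + k / (2 * l ^ 2) * G x ^ 2) - q x t * G x
        = (l ^ 2 * q x t - k * G x) ^ 2 / (2 * k * l ^ 2) := by
      field_simp; ring
    have hid2 : (l ^ 2 / (2 * k) * q x t ^ 2 + k / (2 * l ^ 2) * G x ^ 2) + q x t * G x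
        = (l ^ 2 * q x t + k * G x) ^ 2 / (2 * k * l ^ 2) := by
      field_simp; ring
    have h1 : (0:ℝ) ≤ (l ^ 2 * q x t - k * G x) ^ 2 / (2 * k * l ^ 2) := by positivity
    have h2 : (0:ℝ) ≤ (l ^ 2 * q x t + k * G x) ^ 2 / (2 * k * l ^ 2) := by positivity
    rw [abs_le]
    constructor <;> linarith
  have hRint : (∫ x in (0:ℝ)..l,
      (l ^ 2 / (2 * k) * q x t ^ 2 + k / (2 * l ^ 2) * G x ^ 2))
      = l ^ 2 / (2 * k) * B + k / (2 * l ^ 2) * IG := by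
    rw [intervalIntegral.integral_add ((by
      apply ContinuousOn.intervalIntegrable
      rw [uIcc_of_le hl.le]; exact continuousOn_const.mul (qcOn.pow 2) : IntervalIntegrable
        (fun x => l ^ 2 / (2 * k) * q x t ^ 2) volume 0 l)) ((by
      apply ContinuousOn.intervalIntegrable
      rw [uIcc_of_le hl.le]; exact continuousOn_const.mul (GcOn.pow 2) : IntervalIntegrable
        (fun x => k / (2 * l ^ 2) * G x ^ 2) volume 0 l)),
      intervalIntegral.integral_const_mul, intervalIntegral.integral_const_mul,
      ← hBdef, ← hIGdef]
  have hQGu : IQG ≤ l ^ 2 / (2 * k) * B + k / 2 * A := by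
    have h1 : IQG ≤ l ^ 2 / (2 * k) * B + k / (2 * l ^ 2) * IG := by
      rw [hIQGdef, ← hRint]
      exact intervalIntegral.integral_mono_on hl.le hQGi hRi
        fun x hx => (le_abs_self _).trans (hptw x hx)
    have h2 : k / (2 * l ^ 2) * IG ≤ k / 2 * A := by
      have := mul_le_mul_of_nonneg_left hIG1 (by positivity : (0:ℝ) ≤ k / (2 * l ^ 2))
      calc k / (2 * l ^ 2) * IG ≤ k / (2 * l ^ 2) * (l ^ 2 * A) := this
        _ = k / 2 * A := by field_simp
    linarith
  have hQGl : -(l ^ 2 / (2 * k) * B + k / 2 * A) ≤ IQG := by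
    have h1 : -(l ^ 2 / (2 * k) * B + k / (2 * l ^ 2) * IG) ≤ IQG := by
      rw [hIQGdef, ← hRint]
      rw [← intervalIntegral.integral_neg]
      exact intervalIntegral.integral_mono_on hl.le hRi.neg hQGi
        fun x hx => neg_le_of_neg_le (by
          have := (hptw x hx); have := neg_abs_le (q x t * G x); linarith)
    have h2 : k / (2 * l ^ 2) * IG ≤ k / 2 * A := by
      have := mul_le_mul_of_nonneg_left hIG1 (by positivity : (0:ℝ) ≤ k / (2 * l ^ 2))
      calc k / (2 * l ^ 2) * IG ≤ k / (2 * l ^ 2) * (l ^ 2 * A) := this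
        _ = k / 2 * A := by field_simp
    linarith
  -- final arithmetic check
  have key1 : τq * IQG ≤ l ^ 2 * (τq / (2 * k) * B) + (τq * k / (ρ * c)) * (ρ * c / 2 * A) := by
    have h1 := mul_le_mul_of_nonneg_left hQGu hτq.le
    have h2 : τq * (l ^ 2 / (2 * k) * B + k / 2 * A)
        = l ^ 2 * (τq / (2 * k) * B) + (τq * k / (ρ * c)) * (ρ * c / 2 * A) := by
      field_simp
    linarith
  have key2 : -(l ^ 2 * (τq / (2 * k) * B) + (τq * k / (ρ * c)) * (ρ * c / 2 * A))
      ≤ τq * IQG := by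
    have h1 := mul_le_mul_of_nonneg_left hQGl hτq.le
    have h2 : τq * (l ^ 2 / (2 * k) * B + k / 2 * A)
        = l ^ 2 * (τq / (2 * k) * B) + (τq * k / (ρ * c)) * (ρ * c / 2 * A) := by
      field_simp
    nlinarith
  have key3 : ρ * c / 2 * IG ≤ l ^ 2 * (ρ * c / 2 * A) :=
    calc ρ * c / 2 * IG ≤ ρ * c / 2 * (l ^ 2 * A) :=
          mul_le_mul_of_nonneg_left hIG1 (by positivity)
      _ = l ^ 2 * (ρ * c / 2 * A) := by ring
  have hAa : 0 ≤ ρ * c / 2 * A := by positivity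
  have hDb : 0 ≤ τq / (2 * k) * B := by positivity
  have hC : 0 ≤ τq * k / (ρ * c) := by positivity
  have hIGa : 0 ≤ ρ * c / 2 * IG := by positivity
  clear_value IQG
  clear hIQGdef hIGdef hBdef hAdef hQGu hQGl hIG1 hIG0 hA hB
  clear hRint hptw hRi hQGi hGsq hGi2 GcOn hG
  clear G TcOn qcOn contT contq hgk ht
  have hμA : ρ * c * μ2 / 2 * A = μ2 * (ρ * c / 2 * A) := by ring
  rw [hμA]
  set u := ρ * c / 2 * A with hu
  set v := τq / (2 * k) * B with hv
  set w := τq * k / (ρ * c) with hw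
  set g := ρ * c / 2 * IG with hg2
  set x := τq * IQG with hx
  clear_value u v w g x
  clear hμA A B IG IQG hu hv hw hg2 hx
  constructor
  · nlinarith [key2, hIGa, mul_nonneg hμ2.le hAa, mul_nonneg hμ2.le hDb,
      mul_nonneg hC hDb, mul_nonneg (sq_nonneg l) hAa]
  · nlinarith [key1, key3, mul_nonneg hμ2.le hAa, mul_nonneg hμ2.le hDb,
      mul_nonneg hC hDb, mul_nonneg (sq_nonneg l) hDb]
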